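/- Consider the Widom–Rowlinson model with M ≥ 2 particle types on the K×L square lattice Λ with open boundary conditions. Then every non-stable WR configuration σ ∈ X \ X^s satisfies Φ(σ, X^s) − H(σ) ≤ min{K,L}; in particular Φ(σ, X^s) − H(σ) < min{K,L} + 1. -/

import Mathlib

/-- Sites of the `K × L` square lattice with open boundary conditions:
`(j, i)` lies in column `c_j` and row `r_i`. -/
abbrev SiteO (K L : ℕ) := Fin L × Fin K

/-- Adjacency on the open lattice: the two sites agree in one coordinate and
differ by exactly `1` in the other (no wrap-around). -/
def adjO (K L : ℕ) (v w : SiteO K L) : Prop :=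
  (v.2 = w.2 ∧ ((v.1 : ℕ) + 1 = (w.1 : ℕ) ∨ (w.1 : ℕ) + 1 = (v.1 : ℕ))) ∨
  (v.1 = w.1 ∧ ((v.2 : ℕ) + 1 = (w.2 : ℕ) ∨ (w.2 : ℕ) + 1 = (v.2 : ℕ)))

/-- Widom–Rowlinson configurations with `M` particle types on the open lattice. -/
def IsWRO (K L M : ℕ) (σ : SiteO K L → ℕ) : Prop :=
  (∀ v, σ v ≤ M) ∧ ∀ v w, adjO K L v w → σ v = 0 ∨ σ w = 0 ∨ σ v = σ w

/-- The energy `H(σ) = -#{v : σ v ≠ 0}`. -/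
noncomputable def HO (K L : ℕ) (σ : SiteO K L → ℕ) : ℤ :=
  -(Nat.card {v : SiteO K L // σ v ≠ 0} : ℤ)

/-- `σ` and `σ'` are related by a single-site update: they differ at exactly
one site `v`, and moreover `σ v = 0` or `σ' v = 0`. -/
def UpdO (K L : ℕ) (σ σ' : SiteO K L → ℕ) : Prop :=
  ∃ v, (σ v = 0 ∨ σ' v = 0) ∧ σ v ≠ σ' v ∧ ∀ w, w ≠ v → σ w = σ' w

/-- A path `ω : σ → σ'`: a finite nonempty sequence of WR configurations from
`σ` to `σ'` whose consecutive configurations coincide or are related by a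
single-site update. -/
def IsPathO (K L M : ℕ) (ω : List (SiteO K L → ℕ)) (σ σ' : SiteO K L → ℕ) : Prop :=
  ω ≠ [] ∧ ω.head? = some σ ∧ ω.getLast? = some σ' ∧
    (∀ η ∈ ω, IsWRO K L M η) ∧
    ω.Chain' (fun η η' => η = η' ∨ UpdO K L η η')

/-- The height `Φ_ω` of a path: the maximum energy along it. -/
noncomputable def heightO (K L : ℕ) (ω : List (SiteO K L → ℕ)) : ℤ :=
  sSup {h : ℤ | ∃ η ∈ ω, HO K L η = h}

/-- The communication height `Φ(σ,σ')`: the minimal height over all paths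
`ω : σ → σ'`. -/
noncomputable def commO (K L M : ℕ) (σ σ' : SiteO K L → ℕ) : ℤ :=
  sInf {h : ℤ | ∃ ω, IsPathO K L M ω σ σ' ∧ heightO K L ω = h}

/-- The set `X^s = {s^(1),…,s^(M)}` of stable configurations. -/
def stableO (K L M : ℕ) : Set (SiteO K L → ℕ) :=
  {σ | ∃ m : ℕ, 1 ≤ m ∧ m ≤ M ∧ σ = fun _ => m}

/-- `Φ(σ, A) = min_{σ' ∈ A} Φ(σ, σ')`. -/
noncomputable def commSetO (K L M : ℕ) (σ : SiteO K L → ℕ)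
    (A : Set (SiteO K L → ℕ)) : ℤ :=
  sInf {h : ℤ | ∃ σ' ∈ A, commO K L M σ σ' = h}


-- Auxiliary machinery --

-- ordering of sites, column-major
def ordS (K L : ℕ) (v : SiteO K L) : ℕ := (v.1 : ℕ) * K + (v.2 : ℕ)

lemma ordS_lt (K L : ℕ) (v : SiteO K L) : ordS K L v < L * K := by
  have h1 : (v.1 : ℕ) < L := v.1.isLt
  have h2 : (v.2 : ℕ) < K := v.2.isLt
  have : (v.1 : ℕ) * K + K ≤ L * K := by
    have h1' : (v.1 : ℕ) + 1 ≤ L := h1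
    calc (v.1 : ℕ) * K + K = ((v.1 : ℕ) + 1) * K := by ring
    _ ≤ L * K := Nat.mul_le_mul_right K h1'
  unfold ordS; omega

lemma ordS_inj (K L : ℕ) (v w : SiteO K L) (h : ordS K L v = ordS K L w) : v = w := by
  have h2 : (v.2 : ℕ) < K := v.2.isLt
  have h2' : (w.2 : ℕ) < K := w.2.isLt
  unfold ordS at h
  have h1 : (v.1 : ℕ) = w.1 := by
    by_contra hne
    rcases Nat.lt_or_ge (v.1 : ℕ) (w.1 : ℕ) with hlt | hge
    · have hh : ((v.1 : ℕ) + 1) * K ≤ (w.1 : ℕ) * K := Nat.mul_le_mul_right K hlt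
      nlinarith
    · have hlt : (w.1 : ℕ) < v.1 := by omega
      have hh : ((w.1 : ℕ) + 1) * K ≤ (v.1 : ℕ) * K := Nat.mul_le_mul_right K hlt
      nlinarith
  rw [h1] at h
  exact Prod.ext (Fin.ext h1) (Fin.ext (by omega))

lemma adjO_ordS (K L : ℕ) (v w : SiteO K L) (h : adjO K L v w) :
    ordS K L w = ordS K L v + 1 ∨ ordS K L v = ordS K L w + 1 ∨
    ordS K L w = ordS K L v + K ∨ ordS K L v = ordS K L w + K := by
  unfold ordS
  rcases h with ⟨h2, h1 | h1⟩ | ⟨h1, h2 | h2⟩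
  · have h2' : (v.2 : ℕ) = w.2 := by rw [h2]
    right; right; left; rw [← h1, ← h2']; ring
  · have h2' : (v.2 : ℕ) = w.2 := by rw [h2]
    right; right; right; rw [← h1, h2']; ring
  · have h1' : (v.1 : ℕ) = w.1 := by rw [h1]
    left; rw [← h2, h1']; ring
  · have h1' : (v.1 : ℕ) = w.1 := by rw [h1]
    right; left; rw [← h2, h1']; ring

lemma adjO_ordS_le (K L : ℕ) (v w : SiteO K L) (h : adjO K L v w) :
    ordS K L w ≤ ordS K L v + K ∧ ordS K L v ≤ ordS K L w + K ∧ ordS K L v ≠ ordS K L w := by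
  have hK1 : 0 < K := lt_of_le_of_lt (Nat.zero_le _) v.2.isLt
  rcases adjO_ordS K L v w h with h' | h' | h' | h' <;> omega

lemma exists_site_of_ord (K L : ℕ) (hK : 0 < K) (t : ℕ) (ht : t < L * K) :
    ∃ v : SiteO K L, ordS K L v = t := by
  have hdiv : t / K < L := by
    rcases Nat.lt_or_ge (t / K) L with h | h
    · exact h
    · exfalso
      have : L * K ≤ (t / K) * K := Nat.mul_le_mul_right K h
      have := Nat.div_mul_le_self t K
      omega
  refine ⟨(⟨t / K, hdiv⟩, ⟨t % K, Nat.mod_lt t hK⟩), ?_⟩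
  show (t / K) * K + t % K = t
  have := Nat.div_add_mod t K
  nlinarith [Nat.div_add_mod t K]

lemma exists_neighbor (K L : ℕ) (v : SiteO K L) (h : 1 ≤ ordS K L v) :
    ∃ w : SiteO K L, adjO K L v w ∧ ordS K L w < ordS K L v := by
  by_cases h2 : (v.2 : ℕ) = 0
  · -- top of a column, go to previous column
    have h1 : 1 ≤ (v.1 : ℕ) := by
      by_contra hc
      push_neg at hc
      have hv1 : (v.1 : ℕ) = 0 := by omega
      unfold ordS at h
      rw [hv1, h2] at h
      simp at h
    refine ⟨(⟨(v.1 : ℕ) - 1, by omega⟩, v.2), Or.inl ⟨rfl, Or.inr (by simp; omega)⟩, ?_⟩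
    unfold ordS
    simp only
    have hK1 : 0 < K := lt_of_le_of_lt (Nat.zero_le _) v.2.isLt
    have e : ((v.1 : ℕ) - 1 + 1) = (v.1 : ℕ) := by omega
    have : ((v.1 : ℕ) - 1) * K + K = (v.1 : ℕ) * K := by
      nth_rewrite 2 [← e]; ring
    omega
  · refine ⟨(v.1, ⟨(v.2 : ℕ) - 1, by omega⟩), Or.inr ⟨rfl, Or.inr (by simp; omega)⟩, ?_⟩
    unfold ordS
    simp only
    omega

lemma prefix_const (K L M : ℕ) (σ : SiteO K L → ℕ) (hσ : IsWRO K L M σ)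
    (v0 : SiteO K L) (hv0 : ordS K L v0 = 0) (p : ℕ)
    (hpre : ∀ v, ordS K L v < p → σ v ≠ 0) :
    ∀ v, ordS K L v < p → σ v = σ v0 := by
  have key : ∀ t, ∀ v : SiteO K L, ordS K L v = t → t < p → σ v = σ v0 := by
    intro t
    induction t using Nat.strong_induction_on with
    | _ t ih =>
      intro v hv htp
      rcases Nat.eq_zero_or_pos t with rfl | ht
      · rw [ordS_inj K L v v0 (by omega)]
      · obtain ⟨w, hadj, hlt⟩ := exists_neighbor K L v (by omega)
        have hw : σ w = σ v0 := ih (ordS K L w) (by omega) w rfl (by omega)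
        rcases hσ.2 v w hadj with h | h | h
        · exact absurd h (hpre v (by omega))
        · exact absurd h (by rw [hw]; exact hpre v0 (by omega))
        · rw [h, hw]
  exact fun v hv => key (ordS K L v) v rfl hv

/-- The sweeping configuration. -/
def tauC (K L : ℕ) (σ : SiteO K L → ℕ) (m a b : ℕ) (v : SiteO K L) : ℕ :=
  if ordS K L v + K < a then m else if ordS K L v < b then (if σ v = m then m else 0) else σ v

lemma tauC_congr (K L : ℕ) (σ : SiteO K L → ℕ) (m a b a' b' : ℕ) (v : SiteO K L)
    (h1 : ordS K L v + K < a ↔ ordS K L v + K < a')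
    (h2 : ordS K L v < b ↔ ordS K L v < b') :
    tauC K L σ m a b v = tauC K L σ m a' b' v := by
  unfold tauC
  by_cases c1 : ordS K L v + K < a
  · rw [if_pos c1, if_pos (h1.mp c1)]
  · rw [if_neg c1, if_neg (fun c => c1 (h1.mpr c))]
    by_cases c2 : ordS K L v < b
    · rw [if_pos c2, if_pos (h2.mp c2)]
    · rw [if_neg c2, if_neg (fun c => c2 (h2.mpr c))]

lemma tauC_WR (K L M : ℕ) (σ : SiteO K L → ℕ) (hσ : IsWRO K L M σ)
    (m a b : ℕ) (hm1 : 1 ≤ m) (hmM : m ≤ M) (hab : a ≤ b) :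
    IsWRO K L M (tauC K L σ m a b) := by
  constructor
  · intro v; unfold tauC; split_ifs <;> first | exact hmM | exact hσ.1 v | omega
  · intro v w hadj
    have hord := adjO_ordS_le K L v w hadj
    have hwr := hσ.2 v w hadj
    unfold tauC
    split_ifs <;>
      first
        | tauto
        | omega
        | (exfalso; omega)
        | (rcases hwr with h | h | h <;> simp_all)
        | (rcases hwr with h | h | h <;> simp_all <;> omega)

lemma HO_eq_card (K L : ℕ) (η : SiteO K L → ℕ) :
    HO K L η = -((Finset.univ.filter (fun v => η v ≠ 0)).card : ℤ) := by
  unfold HO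
  congr 2
  rw [Nat.card_eq_fintype_card, Fintype.card_subtype]

lemma tauC_card (K L M : ℕ) (σ : SiteO K L → ℕ) (hσ : IsWRO K L M σ)
    (hK : 2 ≤ K) (hL : 2 ≤ L)
    (v0 : SiteO K L) (hv0 : ordS K L v0 = 0)
    (m : ℕ) (hm : m = if σ v0 = 0 then 1 else σ v0)
    (a b : ℕ) (hab : a ≤ b) (hba : b ≤ a + 1) :
    (Finset.univ.filter (fun v => σ v ≠ 0)).card ≤
      (Finset.univ.filter (fun v => tauC K L σ m a b v ≠ 0)).card + K := by
  classical
  have hm1 : 1 ≤ m := by rw [hm]; split_ifs <;> omega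
  set S := Finset.univ.filter (fun v => σ v ≠ 0) with hS
  set T := Finset.univ.filter (fun v => tauC K L σ m a b v ≠ 0) with hT
  set W := Finset.univ.filter
    (fun v : SiteO K L => a ≤ ordS K L v + K ∧ ordS K L v < b ∧ σ v ≠ 0 ∧ σ v ≠ m) with hW
  -- S ⊆ T ∪ W
  have hSTW : S ⊆ T ∪ W := by
    intro v hv
    rw [hS, Finset.mem_filter] at hv
    rw [Finset.mem_union, hT, hW, Finset.mem_filter, Finset.mem_filter]
    by_cases c1 : ordS K L v + K < a
    · left; refine ⟨Finset.mem_univ v, ?_⟩; unfold tauC; rw [if_pos c1]; omega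
    · by_cases c2 : ordS K L v < b
      · by_cases hvm : σ v = m
        · left; refine ⟨Finset.mem_univ v, ?_⟩; unfold tauC
          rw [if_neg c1, if_pos c2, if_pos hvm]; omega
        · right; exact ⟨Finset.mem_univ v, by omega, c2, hv.2, hvm⟩
      · left; refine ⟨Finset.mem_univ v, ?_⟩; unfold tauC
        rw [if_neg c1, if_neg c2]; exact hv.2
  -- card of W via injection of ordS into an interval
  have hWcard : W.card ≤ K + 1 := by
    have himg : W.image (ordS K L) ⊆ Finset.Ico (a - K) b := by
      intro n hn
      rw [Finset.mem_image] at hn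
      obtain ⟨v, hv, rfl⟩ := hn
      rw [hW, Finset.mem_filter] at hv
      rw [Finset.mem_Ico]; omega
    have hinj : W.card = (W.image (ordS K L)).card := by
      rw [Finset.card_image_of_injOn (fun x _ y _ h => ordS_inj K L x y h)]
    calc W.card = (W.image (ordS K L)).card := hinj
      _ ≤ (Finset.Ico (a - K) b).card := Finset.card_le_card himg
      _ = b - (a - K) := Nat.card_Ico _ _
      _ ≤ K + 1 := by omega
  by_cases hWK : W.card ≤ K
  · calc S.card ≤ (T ∪ W).card := Finset.card_le_card hSTW
      _ ≤ T.card + W.card := Finset.card_union_le T W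
      _ ≤ T.card + K := by omega
  · -- W.card = K + 1
    by_cases hempty : ∃ u, ordS K L u + K < a ∧ σ u = 0
    · obtain ⟨u, hu1, hu2⟩ := hempty
      have huT : u ∈ T := by
        rw [hT, Finset.mem_filter]
        refine ⟨Finset.mem_univ u, ?_⟩
        unfold tauC; rw [if_pos hu1]; omega
      have huS : u ∉ S := by rw [hS, Finset.mem_filter]; push_neg; intro _; exact hu2
      have hsub : S ⊆ (T.erase u) ∪ W := by
        intro v hv
        rcases Finset.mem_union.mp (hSTW hv) with h | h
        · rw [Finset.mem_union]; left
          rw [Finset.mem_erase]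
          exact ⟨fun he => huS (he ▸ hv), h⟩
        · rw [Finset.mem_union]; right; exact h
      have : S.card ≤ (T.erase u).card + W.card :=
        le_trans (Finset.card_le_card hsub) (Finset.card_union_le _ _)
      have hTe : (T.erase u).card = T.card - 1 := Finset.card_erase_of_mem huT
      have hT1 : 1 ≤ T.card := Finset.card_pos.mpr ⟨u, huT⟩
      omega
    · -- prefix fully occupied: contradiction
      exfalso
      push_neg at hempty
      -- get a site v1 with ordS v1 = a - K in W
      have hcard : K + 1 ≤ W.card := by omega
      have himg : W.image (ordS K L) ⊆ Finset.Ico (a - K) b := by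
        intro n hn
        rw [Finset.mem_image] at hn
        obtain ⟨v, hv, rfl⟩ := hn
        rw [hW, Finset.mem_filter] at hv
        rw [Finset.mem_Ico]; omega
      have hinj : W.card = (W.image (ordS K L)).card :=
        (Finset.card_image_of_injOn (fun x _ y _ h => ordS_inj K L x y h)).symm
      have hIcoCard : (Finset.Ico (a - K) b).card = b - (a - K) := Nat.card_Ico _ _
      have haK : K ≤ a ∧ b = a + 1 := by
        have := Finset.card_le_card himg
        omega
      have heq : W.image (ordS K L) = Finset.Ico (a - K) b := by
        apply Finset.eq_of_subset_of_card_le himg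
        omega
      have hmem : a - K ∈ W.image (ordS K L) := by
        rw [heq, Finset.mem_Ico]; omega
      rw [Finset.mem_image] at hmem
      obtain ⟨v1, hv1W, hv1⟩ := hmem
      rw [hW, Finset.mem_filter] at hv1W
      obtain ⟨-, -, -, hv1ne0, hv1nem⟩ := hv1W
      rcases Nat.eq_or_lt_of_le haK.1 with haK' | haK'
      · -- a = K : v1 = v0
        have : ordS K L v1 = 0 := by omega
        have : v1 = v0 := ordS_inj K L v1 v0 (by omega)
        subst this
        rw [hm] at hv1nem
        split_ifs at hv1nem with h0
        · exact hv1ne0 h0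
        · exact hv1nem rfl
      · -- a > K : prefix is constant = m, neighbor of v1 has color m
        have hpre : ∀ v, ordS K L v < a - K → σ v ≠ 0 := by
          intro v hv; exact hempty v (by omega)
        have hconst := prefix_const K L M σ hσ v0 hv0 (a - K) hpre
        have hv00 : σ v0 ≠ 0 := hpre v0 (by omega)
        have hmv0 : m = σ v0 := by rw [hm, if_neg hv00]
        obtain ⟨w, hadj, hwlt⟩ := exists_neighbor K L v1 (by omega)
        have hwm : σ w = σ v0 := hconst w (by omega)
        rcases hσ.2 v1 w hadj with h | h | h
        · exact hv1ne0 h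
        · rw [hwm] at h; exact hv00 h
        · rw [h, hwm, ← hmv0] at hv1nem; exact hv1nem rfl

lemma tauC_HO (K L M : ℕ) (σ : SiteO K L → ℕ) (hσ : IsWRO K L M σ)
    (hK : 2 ≤ K) (hL : 2 ≤ L)
    (v0 : SiteO K L) (hv0 : ordS K L v0 = 0)
    (m : ℕ) (hm : m = if σ v0 = 0 then 1 else σ v0)
    (a b : ℕ) (hab : a ≤ b) (hba : b ≤ a + 1) :
    HO K L (tauC K L σ m a b) ≤ HO K L σ + K := by
  rw [HO_eq_card, HO_eq_card]
  have := tauC_card K L M σ hσ hK hL v0 hv0 m hm a b hab hba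
  push_cast
  omega

lemma step_b (K L : ℕ) (σ : SiteO K L → ℕ) (m : ℕ) (hm1 : 1 ≤ m) (p : ℕ) :
    tauC K L σ m p p = tauC K L σ m p (p + 1) ∨
      UpdO K L (tauC K L σ m p p) (tauC K L σ m p (p + 1)) := by
  by_cases hx : ∃ v : SiteO K L, ordS K L v = p ∧ σ v ≠ 0 ∧ σ v ≠ m
  · right
    obtain ⟨v, hv, hv0, hvm⟩ := hx
    have hK1 : 0 < K := lt_of_le_of_lt (Nat.zero_le _) v.2.isLt
    have hold : tauC K L σ m p p v = σ v := by
      unfold tauC; rw [if_neg (by omega), if_neg (by omega)]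
    have hnew : tauC K L σ m p (p + 1) v = 0 := by
      unfold tauC; rw [if_neg (by omega), if_pos (by omega), if_neg hvm]
    refine ⟨v, Or.inr hnew, by rw [hold, hnew]; exact hv0, ?_⟩
    intro w hw
    have hwv : ordS K L w ≠ p := fun h => hw (ordS_inj K L w v (by omega))
    exact tauC_congr K L σ m p p p (p + 1) w Iff.rfl (by omega)
  · left
    funext w
    push_neg at hx
    by_cases hwp : ordS K L w = p
    · have := hx w hwp
      unfold tauC
      rw [if_neg (by omega), if_neg (by omega), if_neg (by omega), if_pos (by omega)]
      by_cases h0 : σ w = 0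
      · rw [if_neg (by omega), h0]
      · rw [if_pos (this h0)]; exact this h0
    · exact tauC_congr K L σ m p p p (p + 1) w Iff.rfl (by omega)

lemma step_a (K L : ℕ) (σ : SiteO K L → ℕ) (m : ℕ) (hm1 : 1 ≤ m) (p : ℕ) :
    tauC K L σ m p (p + 1) = tauC K L σ m (p + 1) (p + 1) ∨
      UpdO K L (tauC K L σ m p (p + 1)) (tauC K L σ m (p + 1) (p + 1)) := by
  by_cases hx : ∃ v : SiteO K L, ordS K L v + K = p ∧ σ v ≠ m
  · right
    obtain ⟨v, hv, hvm⟩ := hx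
    have hK1 : 0 < K := lt_of_le_of_lt (Nat.zero_le _) v.2.isLt
    have hold : tauC K L σ m p (p + 1) v = 0 := by
      unfold tauC; rw [if_neg (by omega), if_pos (by omega), if_neg hvm]
    have hnew : tauC K L σ m (p + 1) (p + 1) v = m := by
      unfold tauC; rw [if_pos (by omega)]
    refine ⟨v, Or.inl hold, by rw [hold, hnew]; omega, ?_⟩
    intro w hw
    have hwv : ordS K L w ≠ ordS K L v := fun h => hw (ordS_inj K L w v h)
    exact tauC_congr K L σ m p (p + 1) (p + 1) (p + 1) w (by omega) Iff.rfl
  · left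
    funext w
    push_neg at hx
    by_cases hwp : ordS K L w + K = p
    · have hwm := hx w hwp
      unfold tauC
      rw [if_neg (by omega), if_pos (by omega), if_pos hwm, if_pos (by omega)]
    · exact tauC_congr K L σ m p (p + 1) (p + 1) (p + 1) w (by omega) Iff.rfl

lemma exists_good_path (K L M : ℕ) (hK : 2 ≤ K) (hL : 2 ≤ L) (hM : 2 ≤ M)
    (σ : SiteO K L → ℕ) (hσ : IsWRO K L M σ) :
    ∃ m : ℕ, 1 ≤ m ∧ m ≤ M ∧ ∃ ω, IsPathO K L M ω σ (fun _ => m) ∧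
      ∀ η ∈ ω, HO K L η ≤ HO K L σ + K := by
  classical
  set v0 : SiteO K L := (⟨0, by omega⟩, ⟨0, by omega⟩) with hv0def
  have hv0 : ordS K L v0 = 0 := by simp [ordS, hv0def]
  set m : ℕ := if σ v0 = 0 then 1 else σ v0 with hm
  have hm1 : 1 ≤ m := by rw [hm]; split_ifs <;> omega
  have hmM : m ≤ M := by
    rw [hm]; split_ifs with h
    · omega
    · exact hσ.1 v0
  set N : ℕ := L * K + K with hN
  set f : ℕ → SiteO K L → ℕ := fun n => tauC K L σ m (n / 2) ((n + 1) / 2) with hf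
  refine ⟨m, hm1, hmM, (List.range (2 * N + 1)).map f, ⟨?_, ?_, ?_, ?_, ?_⟩, ?_⟩
  · simp
  · -- head
    have : f 0 = σ := by
      funext v; show tauC K L σ m 0 0 v = σ v
      unfold tauC; rw [if_neg (by omega), if_neg (by omega)]
    rw [List.head?_map]
    rw [show List.range (2 * N + 1) = 0 :: (List.range (2 * N)).map Nat.succ from
      List.range_succ_eq_map (n := 2 * N)]
    simp [this]
  · -- last
    have hlast : f (2 * N) = fun _ => m := by
      have e1 : 2 * N / 2 = N := by omega
      have e2 : (2 * N + 1) / 2 = N := by omega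
      funext v
      show tauC K L σ m (2 * N / 2) ((2 * N + 1) / 2) v = m
      rw [e1, e2]
      have := ordS_lt K L v
      unfold tauC; rw [if_pos (by omega)]
    rw [List.range_succ, List.map_append]
    simp only [List.map_cons, List.map_nil]
    rw [List.getLast?_concat]
    simp [hlast]
  · -- all WR
    intro η hη
    rw [List.mem_map] at hη
    obtain ⟨n, _, rfl⟩ := hη
    exact tauC_WR K L M σ hσ m (n / 2) ((n + 1) / 2) hm1 hmM (by omega)
  · -- chain
    simp only [List.Chain']
    rw [List.isChain_map, List.isChain_range_succ]
    intro n hn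
    rcases Nat.even_or_odd n with ⟨p, hp⟩ | ⟨p, hp⟩
    · have e1 : n / 2 = p := by omega
      have e2 : (n + 1) / 2 = p := by omega
      have e3 : (n + 2) / 2 = p + 1 := by omega
      show f n = f (n + 1) ∨ UpdO K L (f n) (f (n + 1))
      rw [hf]
      simp only [e1, e2, e3]
      exact step_b K L σ m hm1 p
    · have e1 : n / 2 = p := by omega
      have e2 : (n + 1) / 2 = p + 1 := by omega
      have e3 : (n + 2) / 2 = p + 1 := by omega
      show f n = f (n + 1) ∨ UpdO K L (f n) (f (n + 1))
      rw [hf]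
      simp only [e1, e2, e3]
      exact step_a K L σ m hm1 p
  · -- energy bound
    intro η hη
    rw [List.mem_map] at hη
    obtain ⟨n, _, rfl⟩ := hη
    exact tauC_HO K L M σ hσ hK hL v0 hv0 m hm (n / 2) ((n + 1) / 2) (by omega) (by omega)

lemma heightO_set_finite (K L : ℕ) (l : List (SiteO K L → ℕ)) :
    {h : ℤ | ∃ η ∈ l, HO K L η = h}.Finite := by
  have : {h : ℤ | ∃ η ∈ l, HO K L η = h} = ((l.map (HO K L)).toFinset : Set ℤ) := by
    ext x
    simp [List.mem_map]
  rw [this]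
  exact (l.map (HO K L)).toFinset.finite_toSet

lemma le_heightO (K L : ℕ) (l : List (SiteO K L → ℕ)) (η : SiteO K L → ℕ) (hη : η ∈ l) :
    HO K L η ≤ heightO K L l :=
  le_csSup (heightO_set_finite K L l).bddAbove ⟨η, hη, rfl⟩

lemma heightO_le (K L : ℕ) (l : List (SiteO K L → ℕ)) (b : ℤ) (hne : l ≠ [])
    (hb : ∀ η ∈ l, HO K L η ≤ b) : heightO K L l ≤ b := by
  apply csSup_le
  · exact ⟨HO K L (l.head hne), l.head hne, List.head_mem hne, rfl⟩
  · rintro x ⟨η, hη, rfl⟩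
    exact hb η hη

lemma HO_le_heightO_of_path (K L M : ℕ) (ω : List (SiteO K L → ℕ)) (σ σ' : SiteO K L → ℕ)
    (hp : IsPathO K L M ω σ σ') : HO K L σ ≤ heightO K L ω :=
  le_heightO K L ω σ (List.mem_of_mem_head? (by rw [hp.2.1]; rfl))

lemma commO_le_of_path (K L M : ℕ) (ω : List (SiteO K L → ℕ)) (σ σ' : SiteO K L → ℕ) (b : ℤ)
    (hp : IsPathO K L M ω σ σ') (hb : heightO K L ω ≤ b) : commO K L M σ σ' ≤ b := by
  refine le_trans (csInf_le ?_ ⟨ω, hp, rfl⟩) hb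
  refine ⟨HO K L σ, ?_⟩
  rintro x ⟨ω', hp', rfl⟩
  exact HO_le_heightO_of_path K L M ω' σ σ' hp'

lemma min_le_commO (K L M : ℕ) (σ σ' : SiteO K L → ℕ) :
    min (HO K L σ) 0 ≤ commO K L M σ σ' := by
  rcases Set.eq_empty_or_nonempty {h : ℤ | ∃ ω, IsPathO K L M ω σ σ' ∧ heightO K L ω = h}
    with h | h
  · unfold commO; rw [h, Int.csInf_empty]; exact min_le_right _ _
  · refine le_trans (min_le_left _ _) (le_csInf h ?_)
    rintro x ⟨ω', hp', rfl⟩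
    exact HO_le_heightO_of_path K L M ω' σ σ' hp'

lemma commSetO_le_of_path (K L M : ℕ) (σ : SiteO K L → ℕ) (m : ℕ)
    (hm1 : 1 ≤ m) (hmM : m ≤ M) (ω : List (SiteO K L → ℕ))
    (hp : IsPathO K L M ω σ (fun _ => m)) (b : ℤ) (hb : heightO K L ω ≤ b) :
    commSetO K L M σ (stableO K L M) ≤ b := by
  have bdd : BddBelow {h : ℤ | ∃ σ' ∈ stableO K L M, commO K L M σ σ' = h} := by
    refine ⟨min (HO K L σ) 0, ?_⟩
    rintro x ⟨σ'', _, rfl⟩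
    exact min_le_commO K L M σ σ''
  calc commSetO K L M σ (stableO K L M) ≤ commO K L M σ (fun _ => m) :=
        csInf_le bdd ⟨fun _ => m, ⟨m, hm1, hmM, rfl⟩, rfl⟩
    _ ≤ b := commO_le_of_path K L M ω σ _ b hp hb

lemma commSetO_le_K (K L M : ℕ) (hK : 2 ≤ K) (hL : 2 ≤ L) (hM : 2 ≤ M)
    (σ : SiteO K L → ℕ) (hσ : IsWRO K L M σ) :
    commSetO K L M σ (stableO K L M) ≤ HO K L σ + K := by
  obtain ⟨m, hm1, hmM, ω, hp, hb⟩ := exists_good_path K L M hK hL hM σ hσ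
  exact commSetO_le_of_path K L M σ m hm1 hmM ω hp _ (heightO_le K L ω _ hp.1 hb)

-- transposition
lemma adjO_swap (K L : ℕ) (v w : SiteO K L) (h : adjO K L v w) :
    adjO L K v.swap w.swap := by
  unfold adjO at *
  exact h.symm

lemma HO_swap (K L : ℕ) (η : SiteO L K → ℕ) :
    HO K L (fun v => η v.swap) = HO L K η := by
  unfold HO
  congr 2
  apply Nat.card_congr
  exact Equiv.subtypeEquiv (Equiv.prodComm (Fin L) (Fin K)) (fun v => Iff.rfl)

lemma UpdO_swap (K L : ℕ) (η η' : SiteO L K → ℕ) (h : UpdO L K η η') :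
    UpdO K L (fun v => η v.swap) (fun v => η' v.swap) := by
  obtain ⟨v, h1, h2, h3⟩ := h
  refine ⟨v.swap, ?_, ?_, ?_⟩
  · simpa using h1
  · simpa using h2
  · intro w hw
    exact h3 w.swap (fun hc => hw (by rw [← hc, Prod.swap_swap]))

lemma commSetO_le_L (K L M : ℕ) (hK : 2 ≤ K) (hL : 2 ≤ L) (hM : 2 ≤ M)
    (σ : SiteO K L → ℕ) (hσ : IsWRO K L M σ) :
    commSetO K L M σ (stableO K L M) ≤ HO K L σ + L := by
  set σ' : SiteO L K → ℕ := fun u => σ u.swap with hσ'def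
  have hσ' : IsWRO L K M σ' := by
    constructor
    · intro u; exact hσ.1 u.swap
    · intro v w hadj
      exact hσ.2 v.swap w.swap (adjO_swap L K v w hadj)
  obtain ⟨m, hm1, hmM, ω', hp', hb'⟩ := exists_good_path L K M hL hK hM σ' hσ'
  set g : (SiteO L K → ℕ) → (SiteO K L → ℕ) := fun η v => η v.swap with hgdef
  have hgσ : g σ' = σ := by
    funext v; show σ v.swap.swap = σ v; rw [Prod.swap_swap]
  have hp : IsPathO K L M (ω'.map g) σ (fun _ => m) := by
    obtain ⟨hne, hhd, hlast, hwr, hch⟩ := hp'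
    refine ⟨by simpa using hne, ?_, ?_, ?_, ?_⟩
    · rw [List.head?_map, hhd]
      simp [hgσ]
    · rw [List.getLast?_map, hlast]
      rfl
    · intro η hη
      rw [List.mem_map] at hη
      obtain ⟨η', hη', rfl⟩ := hη
      have h' := hwr η' hη'
      constructor
      · intro u; exact h'.1 u.swap
      · intro v w hadj
        exact h'.2 v.swap w.swap (adjO_swap K L v w hadj)
    · simp only [List.Chain']
      rw [List.isChain_map]
      refine List.IsChain.imp ?_ hch
      intro η η' h
      rcases h with h | h
      · left; rw [h]
      · right; exact UpdO_swap K L η η' h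
  have hb : ∀ η ∈ ω'.map g, HO K L η ≤ HO K L σ + L := by
    intro η hη
    rw [List.mem_map] at hη
    obtain ⟨η', hη', rfl⟩ := hη
    have e1 : HO K L (g η') = HO L K η' := HO_swap K L η'
    have e2 : HO L K σ' = HO K L σ := by rw [← hgσ]; exact (HO_swap K L σ').symm
    have := hb' η' hη'
    omega
  exact commSetO_le_of_path K L M σ m hm1 hmM (ω'.map g) hp _
    (heightO_le K L _ _ (by simpa using hp'.1) hb)

/-- On the open `K × L` lattice, every non-stable WR configuration `σ` satisfies
`Φ(σ, X^s) - H(σ) ≤ min{K,L}`; in particular `Φ(σ, X^s) - H(σ) < min{K,L} + 1`. -/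
theorem shallow_cycles_open (K L M : ℕ)
    (hK : 2 ≤ K) (hL : 2 ≤ L) (hM : 2 ≤ M)
    (σ : SiteO K L → ℕ) (hσ : IsWRO K L M σ) (hns : σ ∉ stableO K L M) :
    commSetO K L M σ (stableO K L M) - HO K L σ ≤ ((min K L : ℕ) : ℤ) ∧
    commSetO K L M σ (stableO K L M) - HO K L σ < ((min K L : ℕ) : ℤ) + 1 := by
  have h1 := commSetO_le_K K L M hK hL hM σ hσ
  have h2 := commSetO_le_L K L M hK hL hM σ hσ
  have hmin : ((min K L : ℕ) : ℤ) = K ∨ ((min K L : ℕ) : ℤ) = L := by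
    rcases le_total K L with h | h
    · left; rw [min_eq_left h]
    · right; rw [min_eq_right h]
  constructor <;> rcases hmin with h | h <;> rw [h] <;> omega
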